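/- Let n ≥ 2, let a₀ and b₀ be commuting (n−1)×(n−1) complex matrices, let α, β be complex numbers, let u, v be complex column vectors of length n−1, and set a₁ = a₀ − α·I, b₁ = b₀ − β·I. Form the n×n block matrices a = [[a₀, u],[0, α]] and b = [[b₀, v],[0, β]]. Then exp(a+b) = exp(a)·exp(b) if and only if (φ(a₁+b₁) − φ(a₁))·u = (exp(a₁)·φ(b₁) − φ(a₁+b₁))·v, where for a square matrix m, φ(m) = Σ_{k≥0} m^k/(k+1)!. -/

import Mathlib

open Matrix

/-- `φ` applied to a square complex matrix: `φ(m) = Σ_{k≥0} m^k / (k+1)!`,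
the power series of `φ(z) = (e^z - 1)/z` (with `φ(0) = 1`). -/
noncomputable def matPhi {m : Type*} [Fintype m] [DecidableEq m]
    (A : Matrix m m ℂ) : Matrix m m ℂ :=
  ∑' k : ℕ, (((k + 1).factorial : ℂ))⁻¹ • A ^ k

namespace ExpBlockAux

open Finset

variable {m : Type*} [Fintype m] [DecidableEq m]

theorem norm_fact_succ_inv_le (i : ℕ) :
    ‖(((i + 1).factorial : ℂ))⁻¹‖ ≤ ‖((i.factorial : ℂ))⁻¹‖ := by
  simp only [norm_inv, Complex.norm_natCast]
  gcongr
  all_goals omega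




theorem pow_add_smul_one (t : Matrix m m ℂ) (α : ℂ) (i : ℕ) :
    (t + α • 1) ^ i = ∑ k ∈ range (i + 1), ((i.choose k : ℂ) * α ^ (i - k)) • t ^ k := by
  rw [((Commute.one_right t).smul_right α).add_pow]
  refine Finset.sum_congr rfl fun k hk => ?_
  rw [smul_pow, one_pow, mul_smul_comm, mul_one, smul_mul_assoc,
    ((Nat.cast_commute (i.choose k) (t ^ k)).symm).eq,
    ← nsmul_eq_mul, ← Nat.cast_smul_eq_nsmul ℂ, smul_smul, mul_comm]

theorem sum_swap_tri {M : Type*} [AddCommMonoid M] (n : ℕ) (F : ℕ → ℕ → M) :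
    ∑ i ∈ range (n + 1), ∑ k ∈ range (i + 1), F i k
      = ∑ k ∈ range (n + 1), ∑ i ∈ Finset.Icc k n, F i k := by
  simp_rw [Finset.range_eq_Ico]
  rw [← Finset.sum_Ico_Ico_comm 0 (n + 1) (fun k i => F i k)]
  exact Finset.sum_congr rfl fun k _ =>
    Finset.sum_congr (by rw [Finset.Ico_add_one_right_eq_Icc]) fun _ _ => rfl

theorem coef_eq (n j : ℕ) (hj : j ≤ n) :
    (((n + 1).factorial : ℂ))⁻¹ * ((n + 1).choose (n - j + 1) : ℂ)
      = ((j.factorial : ℂ))⁻¹ * (((n - j + 1).factorial : ℂ))⁻¹ := by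
  have h1 : n - j + 1 = (n + 1) - j := by omega
  have h2 : (n + 1).choose ((n + 1) - j) = (n + 1).choose j :=
    Nat.choose_symm (by omega)
  have h3 : (n + 1).choose j * j.factorial * ((n + 1) - j).factorial
      = (n + 1).factorial := Nat.choose_mul_factorial_mul_factorial (by omega)
  have h3' : ((n + 1).choose j : ℂ) * (j.factorial : ℂ) * (((n + 1) - j).factorial : ℂ)
      = ((n + 1).factorial : ℂ) := by exact_mod_cast congrArg (Nat.cast (R := ℂ)) h3
  rw [h1, h2]
  have hf1 : (j.factorial : ℂ) ≠ 0 := Nat.cast_ne_zero.mpr (Nat.factorial_ne_zero _)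
  have hf2 : (((n + 1) - j).factorial : ℂ) ≠ 0 := Nat.cast_ne_zero.mpr (Nat.factorial_ne_zero _)
  have hf3 : (((n + 1).factorial : ℂ)) ≠ 0 := Nat.cast_ne_zero.mpr (Nat.factorial_ne_zero _)
  field_simp
  linear_combination h3'

theorem per_n (t : Matrix m m ℂ) (α : ℂ) (n : ℕ) :
    (((n + 1).factorial : ℂ))⁻¹ • ∑ i ∈ range (n + 1), α ^ (n - i) • (t + α • 1) ^ i =
      ∑ kl ∈ Finset.HasAntidiagonal.antidiagonal n,
        ((((kl.1.factorial : ℂ))⁻¹ * α ^ kl.1) • (1 : Matrix m m ℂ)) *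
          ((((kl.2 + 1).factorial : ℂ))⁻¹ • t ^ kl.2) := by
  -- RHS simplification
  rw [Finset.Nat.sum_antidiagonal_eq_sum_range_succ_mk]
  have hR : ∀ j ∈ range (n + 1),
      ((((j.factorial : ℂ))⁻¹ * α ^ j) • (1 : Matrix m m ℂ)) *
        ((((n - j + 1).factorial : ℂ))⁻¹ • t ^ (n - j))
      = ((((n + 1).factorial : ℂ))⁻¹ *
          (((n + 1).choose (n - j + 1) : ℂ) * α ^ j)) • t ^ (n - j) := by
    intro j hj
    rw [smul_mul_assoc, one_mul, smul_smul]
    congr 1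
    rw [← mul_assoc, coef_eq n j (by simpa using Nat.lt_succ_iff.mp (mem_range.mp hj))]
    ring
  rw [Finset.sum_congr rfl hR]
  -- LHS
  have hL : ∀ i ∈ range (n + 1), α ^ (n - i) • (t + α • 1) ^ i
      = ∑ k ∈ range (i + 1), ((i.choose k : ℂ) * α ^ (n - k)) • t ^ k := by
    intro i hi
    rw [pow_add_smul_one, Finset.smul_sum]
    refine Finset.sum_congr rfl fun k hk => ?_
    rw [smul_smul]
    congr 1
    have : α ^ (n - i) * α ^ (i - k) = α ^ (n - k) := by
      rw [← pow_add]
      congr 1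
      have := mem_range.mp hi
      have := mem_range.mp hk
      omega
    rw [← mul_assoc, mul_comm (α ^ (n - i)) _, mul_assoc, this]
  rw [Finset.sum_congr rfl hL, sum_swap_tri]
  -- collect inner sums
  have hC : ∀ k ∈ range (n + 1),
      ∑ i ∈ Finset.Icc k n, ((i.choose k : ℂ) * α ^ (n - k)) • t ^ k
        = (((n + 1).choose (k + 1) : ℂ) * α ^ (n - k)) • t ^ k := by
    intro k hk
    rw [← Finset.sum_smul, ← Finset.sum_mul]
    congr 2
    rw [← Nat.cast_sum]
    exact_mod_cast congrArg (Nat.cast (R := ℂ)) (Nat.sum_Icc_choose n k)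
  rw [Finset.sum_congr rfl hC, Finset.smul_sum]
  -- reflect the LHS
  rw [← Finset.sum_range_reflect (fun k =>
    (((n + 1).factorial : ℂ))⁻¹ • ((((n + 1).choose (k + 1) : ℂ) * α ^ (n - k)) • t ^ k)) (n + 1)]
  refine Finset.sum_congr rfl fun j hj => ?_
  have hjn : j ≤ n := by simpa using Nat.lt_succ_iff.mp (mem_range.mp hj)
  have e1 : n + 1 - 1 - j = n - j := by omega
  have e2 : n - (n - j) = j := by omega
  rw [e1, smul_smul, e2]

theorem key (t : Matrix m m ℂ) (α : ℂ) :
    HasSum (fun k : ℕ => ((k.factorial : ℂ))⁻¹ •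
        ∑ i ∈ range k, α ^ (k - 1 - i) • (t + α • 1) ^ i)
      (Complex.exp α • matPhi t) := by
  letI : SeminormedRing (Matrix m m ℂ) := Matrix.linftyOpSemiNormedRing
  letI : NormedRing (Matrix m m ℂ) := Matrix.linftyOpNormedRing
  letI : NormedAlgebra ℂ (Matrix m m ℂ) := Matrix.linftyOpNormedAlgebra
  set f : ℕ → Matrix m m ℂ :=
    fun j => (((j.factorial : ℂ))⁻¹ * α ^ j) • (1 : Matrix m m ℂ) with hf
  set g : ℕ → Matrix m m ℂ :=
    fun i => (((i + 1).factorial : ℂ))⁻¹ • t ^ i with hg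
  have hfn : Summable fun j => ‖f j‖ := by
    have : (fun j => ‖f j‖) =
        fun j => ‖((j.factorial : ℂ))⁻¹ • α ^ j‖ * ‖(1 : Matrix m m ℂ)‖ := by
      funext j
      rw [hf, norm_smul, smul_eq_mul]
    rw [this]
    exact (NormedSpace.norm_expSeries_summable' (𝕂 := ℂ) α).mul_right _
  have hgn : Summable fun i => ‖g i‖ := by
    refine Summable.of_nonneg_of_le (fun _ => norm_nonneg _) (fun i => ?_)
      (NormedSpace.norm_expSeries_summable' (𝕂 := ℂ) t)
    rw [hg]
    simp only []
    rw [norm_smul, norm_smul]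
    exact mul_le_mul_of_nonneg_right (norm_fact_succ_inv_le i) (norm_nonneg _)
  -- the product of the sums
  have hmul : ((∑' n, f n) * ∑' n, g n)
      = ∑' n, ∑ kl ∈ Finset.HasAntidiagonal.antidiagonal n, f kl.1 * g kl.2 :=
    tsum_mul_tsum_eq_tsum_sum_antidiagonal_of_summable_norm hfn hgn
  have hf_tsum : (∑' n, f n) = Complex.exp α • (1 : Matrix m m ℂ) := by
    rw [hf]
    rw [Summable.tsum_smul_const]
    · congr 1
      have : (fun j : ℕ => ((j.factorial : ℂ))⁻¹ * α ^ j)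
          = fun j : ℕ => ((j.factorial : ℂ))⁻¹ • α ^ j := by
        funext j; rw [smul_eq_mul]
      rw [this]
      have h2 : Complex.exp α = NormedSpace.exp α := by rw [Complex.exp_eq_exp_ℂ]
      rw [h2, NormedSpace.exp_eq_tsum ℂ]
    · have : (fun j : ℕ => ((j.factorial : ℂ))⁻¹ * α ^ j)
          = fun j : ℕ => ((j.factorial : ℂ))⁻¹ • α ^ j := by
        funext j; rw [smul_eq_mul]
      rw [this]
      exact NormedSpace.expSeries_summable' (𝕂 := ℂ) α
  have hg_tsum : (∑' n, g n) = matPhi t := rfl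
  have hsum : Summable fun n => ∑ kl ∈ Finset.HasAntidiagonal.antidiagonal n, f kl.1 * g kl.2 :=
    (summable_norm_sum_mul_antidiagonal_of_summable_norm hfn hgn).of_norm
  set h : ℕ → Matrix m m ℂ := fun k => ((k.factorial : ℂ))⁻¹ •
      ∑ i ∈ range k, α ^ (k - 1 - i) • (t + α • 1) ^ i with hh
  have hshift : (fun n : ℕ => h (n + 1))
      = fun n => ∑ kl ∈ Finset.HasAntidiagonal.antidiagonal n, f kl.1 * g kl.2 := by
    funext n
    rw [hh]
    simp only [Nat.add_sub_cancel]
    exact per_n t α n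
  have hsummable : Summable h := by
    refine (summable_nat_add_iff 1).mp ?_
    rw [hshift]
    exact hsum
  have htsum : ∑' k, h k = Complex.exp α • matPhi t := by
    rw [hsummable.tsum_eq_zero_add]
    have h0 : h 0 = 0 := by simp [hh]
    rw [h0, zero_add, tsum_congr (fun n => congrFun hshift n), ← hmul, hf_tsum, hg_tsum,
      smul_mul_assoc, one_mul]
  exact htsum ▸ hsummable.hasSum



theorem mul_of_const (X : Matrix m Unit ℂ) (c : ℂ) :
    X * (of fun _ _ => c : Matrix Unit Unit ℂ) = c • X := by
  ext i j
  rw [Matrix.mul_apply]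
  simp [Finset.sum_const, mul_comm]

theorem of_mul_of (c d : ℂ) :
    (of fun _ _ => c : Matrix Unit Unit ℂ) * (of fun _ _ => d) = of fun _ _ => c * d := by
  ext i j
  rw [Matrix.mul_apply]
  simp

theorem of_one : (of fun _ _ => (1 : ℂ) : Matrix Unit Unit ℂ) = 1 := by
  ext i j
  simp [Matrix.one_apply, eq_iff_true_of_subsingleton]

theorem blockPow (A : Matrix m m ℂ) (u : Matrix m Unit ℂ) (α : ℂ) (k : ℕ) :
    (fromBlocks A u (0 : Matrix Unit m ℂ) (of fun _ _ => α)) ^ k =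
      fromBlocks (A ^ k) ((∑ i ∈ range k, α ^ (k - 1 - i) • A ^ i) * u)
        0 (of fun _ _ => α ^ k) := by
  induction k with
  | zero =>
      simp only [pow_zero, range_zero, Finset.sum_empty, Matrix.zero_mul, of_one]
      rw [← fromBlocks_one]
  | succ k ih =>
      rw [pow_succ, ih, fromBlocks_multiply]
      refine Matrix.fromBlocks_inj.mpr ⟨?_, ?_, ?_, ?_⟩
      · rw [Matrix.mul_zero, add_zero, ← pow_succ]
      · -- top-right
        rw [mul_of_const, Finset.sum_range_succ]
        have h1 : (k + 1) - 1 - k = 0 := by omega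
        have h2 : ∀ i ∈ range k, α ^ ((k + 1) - 1 - i) • A ^ i
            = α • (α ^ (k - 1 - i) • A ^ i) := by
          intro i hi
          rw [smul_smul, ← pow_succ']
          congr 2
          have := mem_range.mp hi
          omega
        rw [Finset.sum_congr rfl h2, h1, pow_zero, one_smul, ← Finset.smul_sum,
          Matrix.add_mul, Matrix.smul_mul, add_comm]
      · simp
      · rw [Matrix.zero_mul, zero_add, of_mul_of, ← pow_succ]

theorem smul_one_unit (c : ℂ) :
    c • (1 : Matrix Unit Unit ℂ) = of fun _ _ => c := by
  ext i j
  simp [Matrix.one_apply, eq_iff_true_of_subsingleton]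

theorem exp_fromBlocks (A : Matrix m m ℂ) (u : Matrix m Unit ℂ) (α : ℂ) :
    NormedSpace.exp (fromBlocks A u (0 : Matrix Unit m ℂ) (of fun _ _ => α)) =
      fromBlocks (NormedSpace.exp A)
        (Complex.exp α • (matPhi (A - α • 1) * u))
        (0 : Matrix Unit m ℂ) (of fun _ _ => Complex.exp α) := by
  letI : SeminormedRing (Matrix (m ⊕ Unit) (m ⊕ Unit) ℂ) := Matrix.linftyOpSemiNormedRing
  letI : NormedRing (Matrix (m ⊕ Unit) (m ⊕ Unit) ℂ) := Matrix.linftyOpNormedRing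
  letI : NormedAlgebra ℂ (Matrix (m ⊕ Unit) (m ⊕ Unit) ℂ) := Matrix.linftyOpNormedAlgebra
  letI : SeminormedRing (Matrix m m ℂ) := Matrix.linftyOpSemiNormedRing
  letI : NormedRing (Matrix m m ℂ) := Matrix.linftyOpNormedRing
  letI : NormedAlgebra ℂ (Matrix m m ℂ) := Matrix.linftyOpNormedAlgebra
  set N : Matrix (m ⊕ Unit) (m ⊕ Unit) ℂ :=
    fromBlocks A u (0 : Matrix Unit m ℂ) (of fun _ _ => α) with hN
  have hNsum : HasSum (fun k : ℕ => ((k.factorial : ℂ))⁻¹ • N ^ k)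
      (NormedSpace.exp N) := by
    rw [NormedSpace.exp_eq_tsum ℂ]
    exact (NormedSpace.expSeries_summable' (𝕂 := ℂ) N).hasSum
  -- block extraction monoid homs
  have cont12 : Continuous (Matrix.toBlocks₁₂ :
      Matrix (m ⊕ Unit) (m ⊕ Unit) ℂ → Matrix m Unit ℂ) :=
    by
      apply continuous_matrix
      intro i j
      show Continuous fun M : Matrix (m ⊕ Unit) (m ⊕ Unit) ℂ => M (Sum.inl i) (Sum.inr j)
      exact (continuous_apply _).comp (continuous_apply _)
  have cont11 : Continuous (Matrix.toBlocks₁₁ :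
      Matrix (m ⊕ Unit) (m ⊕ Unit) ℂ → Matrix m m ℂ) :=
    by
      apply continuous_matrix
      intro i j
      show Continuous fun M : Matrix (m ⊕ Unit) (m ⊕ Unit) ℂ => M (Sum.inl i) (Sum.inl j)
      exact (continuous_apply _).comp (continuous_apply _)
  have cont21 : Continuous (Matrix.toBlocks₂₁ :
      Matrix (m ⊕ Unit) (m ⊕ Unit) ℂ → Matrix Unit m ℂ) :=
    by
      apply continuous_matrix
      intro i j
      show Continuous fun M : Matrix (m ⊕ Unit) (m ⊕ Unit) ℂ => M (Sum.inr i) (Sum.inl j)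
      exact (continuous_apply _).comp (continuous_apply _)
  have cont22 : Continuous (Matrix.toBlocks₂₂ :
      Matrix (m ⊕ Unit) (m ⊕ Unit) ℂ → Matrix Unit Unit ℂ) :=
    by
      apply continuous_matrix
      intro i j
      show Continuous fun M : Matrix (m ⊕ Unit) (m ⊕ Unit) ℂ => M (Sum.inr i) (Sum.inr j)
      exact (continuous_apply _).comp (continuous_apply _)
  let tb12 : Matrix (m ⊕ Unit) (m ⊕ Unit) ℂ →+ Matrix m Unit ℂ :=
    AddMonoidHom.mk' Matrix.toBlocks₁₂ (fun X Y => rfl)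
  let tb11 : Matrix (m ⊕ Unit) (m ⊕ Unit) ℂ →+ Matrix m m ℂ :=
    AddMonoidHom.mk' Matrix.toBlocks₁₁ (fun X Y => rfl)
  let tb21 : Matrix (m ⊕ Unit) (m ⊕ Unit) ℂ →+ Matrix Unit m ℂ :=
    AddMonoidHom.mk' Matrix.toBlocks₂₁ (fun X Y => rfl)
  let tb22 : Matrix (m ⊕ Unit) (m ⊕ Unit) ℂ →+ Matrix Unit Unit ℂ :=
    AddMonoidHom.mk' Matrix.toBlocks₂₂ (fun X Y => rfl)
  -- block 11
  have h11 : (NormedSpace.exp N).toBlocks₁₁ = NormedSpace.exp A := by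
    have hmap := hNsum.map tb11 cont11
    have hfun : (⇑tb11 ∘ fun k : ℕ => ((k.factorial : ℂ))⁻¹ • N ^ k)
        = fun k : ℕ => ((k.factorial : ℂ))⁻¹ • A ^ k := by
      funext k
      show (((k.factorial : ℂ))⁻¹ • N ^ k).toBlocks₁₁ = _
      rw [hN, blockPow]
      rfl
    rw [hfun] at hmap
    have : HasSum (fun k : ℕ => ((k.factorial : ℂ))⁻¹ • A ^ k)
        (NormedSpace.exp A) := by
      rw [NormedSpace.exp_eq_tsum ℂ]
      exact (NormedSpace.expSeries_summable' (𝕂 := ℂ) A).hasSum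
    exact hmap.unique this
  -- block 21
  have h21 : (NormedSpace.exp N).toBlocks₂₁ = 0 := by
    have hmap := hNsum.map tb21 cont21
    have hfun : (⇑tb21 ∘ fun k : ℕ => ((k.factorial : ℂ))⁻¹ • N ^ k)
        = fun _ : ℕ => (0 : Matrix Unit m ℂ) := by
      funext k
      show (((k.factorial : ℂ))⁻¹ • N ^ k).toBlocks₂₁ = _
      rw [hN, blockPow]
      show ((k.factorial : ℂ))⁻¹ • (0 : Matrix Unit m ℂ) = 0
      rw [smul_zero]
    rw [hfun] at hmap
    exact hmap.unique hasSum_zero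
  -- block 22
  have h22 : (NormedSpace.exp N).toBlocks₂₂ = of fun _ _ => Complex.exp α := by
    have hmap := hNsum.map tb22 cont22
    have hfun : (⇑tb22 ∘ fun k : ℕ => ((k.factorial : ℂ))⁻¹ • N ^ k)
        = fun k : ℕ => (((k.factorial : ℂ))⁻¹ • α ^ k) • (1 : Matrix Unit Unit ℂ) := by
      funext k
      show (((k.factorial : ℂ))⁻¹ • N ^ k).toBlocks₂₂ = _
      rw [hN, blockPow]
      show ((k.factorial : ℂ))⁻¹ • (of fun _ _ => α ^ k : Matrix Unit Unit ℂ) = _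
      rw [← smul_one_unit (α ^ k), smul_smul, smul_eq_mul]
    rw [hfun] at hmap
    have hα : HasSum (fun k : ℕ => (((k.factorial : ℂ))⁻¹ • α ^ k))
        (Complex.exp α) := by
      have : Complex.exp α = NormedSpace.exp α := by rw [Complex.exp_eq_exp_ℂ]
      rw [this, NormedSpace.exp_eq_tsum ℂ]
      exact (NormedSpace.expSeries_summable' (𝕂 := ℂ) α).hasSum
    have := hα.smul_const (1 : Matrix Unit Unit ℂ)
    rw [smul_one_unit] at this
    exact hmap.unique this
  -- block 12
  have h12 : (NormedSpace.exp N).toBlocks₁₂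
      = Complex.exp α • (matPhi (A - α • 1) * u) := by
    have hmap := hNsum.map tb12 cont12
    have hfun : (⇑tb12 ∘ fun k : ℕ => ((k.factorial : ℂ))⁻¹ • N ^ k)
        = fun k : ℕ => (((k.factorial : ℂ))⁻¹ •
            ∑ i ∈ range k, α ^ (k - 1 - i) • A ^ i) * u := by
      funext k
      show (((k.factorial : ℂ))⁻¹ • N ^ k).toBlocks₁₂ = _
      rw [hN, blockPow]
      show ((k.factorial : ℂ))⁻¹ • ((∑ i ∈ range k, α ^ (k - 1 - i) • A ^ i) * u) = _
      rw [Matrix.smul_mul]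
    rw [hfun] at hmap
    have hkey := key (A - α • 1) α
    rw [sub_add_cancel] at hkey
    -- multiply on the right by u
    let mulu : Matrix m m ℂ →+ Matrix m Unit ℂ :=
      AddMonoidHom.mk' (fun X => X * u) (fun X Y => Matrix.add_mul X Y u)
    have contu : Continuous (fun X : Matrix m m ℂ => X * u) := by
      exact Continuous.matrix_mul continuous_id continuous_const
    have := hkey.map mulu contu
    have h2 : (⇑mulu ∘ fun k : ℕ => ((k.factorial : ℂ))⁻¹ •
        ∑ i ∈ range k, α ^ (k - 1 - i) • A ^ i)
        = fun k : ℕ => (((k.factorial : ℂ))⁻¹ •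
            ∑ i ∈ range k, α ^ (k - 1 - i) • A ^ i) * u := rfl
    rw [h2] at this
    have h3 : mulu (Complex.exp α • matPhi (A - α • 1))
        = Complex.exp α • (matPhi (A - α • 1) * u) := by
      show (Complex.exp α • matPhi (A - α • 1)) * u = _
      rw [Matrix.smul_mul]
    rw [h3] at this
    exact hmap.unique this
  conv_lhs => rw [← fromBlocks_toBlocks (NormedSpace.exp N), h11, h12, h21, h22]

theorem exp_smul_one (α : ℂ) :
    NormedSpace.exp (α • (1 : Matrix m m ℂ)) = Complex.exp α • 1 := by
  letI : SeminormedRing (Matrix m m ℂ) := Matrix.linftyOpSemiNormedRing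
  letI : NormedRing (Matrix m m ℂ) := Matrix.linftyOpNormedRing
  letI : NormedAlgebra ℂ (Matrix m m ℂ) := Matrix.linftyOpNormedAlgebra
  rw [NormedSpace.exp_eq_tsum ℂ]
  show (∑' k : ℕ, ((k.factorial : ℂ))⁻¹ • (α • (1 : Matrix m m ℂ)) ^ k) = _
  have h1 : (fun k : ℕ => ((k.factorial : ℂ))⁻¹ • (α • (1 : Matrix m m ℂ)) ^ k)
      = fun k : ℕ => (((k.factorial : ℂ))⁻¹ • α ^ k) • (1 : Matrix m m ℂ) := by
    funext k
    rw [smul_pow, one_pow, smul_smul, smul_eq_mul]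
  rw [h1]
  have hα : HasSum (fun k : ℕ => ((k.factorial : ℂ))⁻¹ • α ^ k) (Complex.exp α) := by
    have h2 : Complex.exp α = NormedSpace.exp α := by rw [Complex.exp_eq_exp_ℂ]
    rw [h2, NormedSpace.exp_eq_tsum ℂ]
    exact (NormedSpace.expSeries_summable' (𝕂 := ℂ) α).hasSum
  exact (hα.smul_const 1).tsum_eq

theorem exp_split (A : Matrix m m ℂ) (α : ℂ) :
    NormedSpace.exp A = Complex.exp α • NormedSpace.exp (A - α • 1) := by
  have hcomm : Commute (A - α • 1) (α • (1 : Matrix m m ℂ)) :=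
    (Commute.one_right _).smul_right α
  have h := Matrix.exp_add_of_commute (A - α • 1) (α • 1) hcomm
  rw [sub_add_cancel] at h
  rw [h, exp_smul_one, mul_smul_comm, mul_one]


end ExpBlockAux

open ExpBlockAux

/-- Equation (6): with `a = [[a₀, u], [0, α]]`, `b = [[b₀, v], [0, β]]`,
`a₁ = a₀ - α • I`, `b₁ = b₀ - β • I` and `a₀ * b₀ = b₀ * a₀`, one has
`exp (a + b) = exp a * exp b` iff
`(φ(a₁+b₁) - φ(a₁)) * u = (exp a₁ * φ(b₁) - φ(a₁+b₁)) * v`. -/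
theorem exp_add_eq_exp_mul_exp_iff (n : ℕ) (hn : 2 ≤ n)
    (a₀ b₀ : Matrix (Fin (n - 1)) (Fin (n - 1)) ℂ)
    (hcomm : a₀ * b₀ = b₀ * a₀)
    (α β : ℂ) (u v : Matrix (Fin (n - 1)) Unit ℂ)
    (a₁ b₁ : Matrix (Fin (n - 1)) (Fin (n - 1)) ℂ)
    (ha₁ : a₁ = a₀ - α • 1) (hb₁ : b₁ = b₀ - β • 1)
    (a b : Matrix (Fin (n - 1) ⊕ Unit) (Fin (n - 1) ⊕ Unit) ℂ)
    (hA : a = Matrix.fromBlocks a₀ u 0 (Matrix.of fun _ _ => α))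
    (hB : b = Matrix.fromBlocks b₀ v 0 (Matrix.of fun _ _ => β)) :
    NormedSpace.exp (a + b) = NormedSpace.exp a * NormedSpace.exp b ↔
      (matPhi (a₁ + b₁) - matPhi a₁) * u =
        (NormedSpace.exp a₁ * matPhi b₁ - matPhi (a₁ + b₁)) * v := by
  subst hA hB ha₁ hb₁
  have hab : (fromBlocks a₀ u (0 : Matrix Unit (Fin (n - 1)) ℂ) (of fun _ _ => α)) +
      (fromBlocks b₀ v 0 (of fun _ _ => β))
      = fromBlocks (a₀ + b₀) (u + v) 0 (of fun _ _ => (α + β)) := by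
    rw [fromBlocks_add, add_zero]
    have : ((of fun _ _ => α) + (of fun _ _ => β) : Matrix Unit Unit ℂ)
        = of fun _ _ => α + β := by
      ext i j
      simp
    rw [this]
  have hsub : (a₀ + b₀) - (α + β) • 1 = (a₀ - α • 1) + (b₀ - β • 1) := by
    rw [add_smul]
    abel
  rw [hab, exp_fromBlocks, exp_fromBlocks, exp_fromBlocks, fromBlocks_multiply, hsub]
  rw [Matrix.zero_mul, Matrix.mul_zero, Matrix.mul_zero, Matrix.zero_mul, add_zero,
    zero_add, zero_add, of_mul_of, mul_of_const]
  rw [fromBlocks_inj]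
  have hTL : NormedSpace.exp (a₀ + b₀) =
      NormedSpace.exp a₀ * NormedSpace.exp b₀ :=
    Matrix.exp_add_of_commute a₀ b₀ hcomm
  have hBR : (of fun _ _ => Complex.exp (α + β) : Matrix Unit Unit ℂ)
      = of fun _ _ => Complex.exp α * Complex.exp β := by
    rw [Complex.exp_add]
  simp only [hTL, hBR, true_and, and_true, eq_self_iff_true]
  -- now the top-right condition
  rw [exp_split a₀ α]
  have e1 : (Complex.exp α • NormedSpace.exp (a₀ - α • 1)) *
        (Complex.exp β • (matPhi (b₀ - β • 1) * v))
      = Complex.exp (α + β) •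
        (NormedSpace.exp (a₀ - α • 1) * (matPhi (b₀ - β • 1) * v)) := by
    rw [Matrix.smul_mul, Matrix.mul_smul, smul_smul, ← Complex.exp_add]
  have e2 : Complex.exp β • (Complex.exp α • (matPhi (a₀ - α • 1) * u))
      = Complex.exp (α + β) • (matPhi (a₀ - α • 1) * u) := by
    rw [smul_smul, ← Complex.exp_add, add_comm]
  rw [e1, e2, ← smul_add]
  rw [(smul_right_injective (Matrix (Fin (n - 1)) Unit ℂ)
      (Complex.exp_ne_zero (α + β))).eq_iff]
  rw [Matrix.mul_add, Matrix.sub_mul, Matrix.sub_mul, Matrix.mul_assoc,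
    sub_eq_sub_iff_add_eq_add]
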